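/- Let U, V be finite-dimensional vector spaces over a field F, U_0 a linear subspace of U, π : U → U/U_0 the canonical projection, and S a linear subspace of Hom(U,V). Let S_{U_0} = {u ∈ S : u(x) = 0 for all x ∈ U_0} and S^⊥ = {v ∈ Hom(V,U) : tr(v∘u) = 0 for all u ∈ S}. Then dim S_{U_0} + dim(π∘S^⊥) = (dim V)(dim U − dim U_0), where π∘S^⊥ = {π∘v : v ∈ S^⊥} ⊆ Hom(V, U/U_0). -/

import Mathlib

variable {F U V : Type*} [Field F] [AddCommGroup U] [Module F U]
  [AddCommGroup V] [Module F V]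

/-- The subspace of S of maps vanishing on U₀. -/
def vanishOn (F : Type*) [Field F] {U V : Type*} [AddCommGroup U] [Module F U]
    [AddCommGroup V] [Module F V] (U0 : Submodule F U) : Submodule F (U →ₗ[F] V) where
  carrier := {u | ∀ x ∈ U0, u x = 0}
  add_mem' := fun ha hb x hx => by simp [ha x hx, hb x hx]
  zero_mem' := fun x _ => rfl
  smul_mem' := fun c u hu x hx => by simp [hu x hx]

/-- The trace-orthogonal space S^⊥ ⊆ Hom(V,U) of a subspace S ⊆ Hom(U,V). -/
def traceOrtho (F : Type*) [Field F] {U V : Type*} [AddCommGroup U] [Module F U]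
    [AddCommGroup V] [Module F V] (S : Submodule F (U →ₗ[F] V)) :
    Submodule F (V →ₗ[F] U) where
  carrier := {v | ∀ u ∈ S, LinearMap.trace F U (v ∘ₗ u) = 0}
  add_mem' := by
    intro a b ha hb u hu
    rw [LinearMap.add_comp, map_add, ha u hu, hb u hu, add_zero]
  zero_mem' := by
    intro u hu
    rw [LinearMap.zero_comp, map_zero]
  smul_mem' := by
    intro c v hv u hu
    rw [LinearMap.smul_comp, map_smul, hv u hu, smul_zero]


open LinearMap Module

noncomputable def tracePair (F A B : Type*) [Field F] [AddCommGroup A] [Module F A]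
    [AddCommGroup B] [Module F B] :
    (B →ₗ[F] A) →ₗ[F] Module.Dual F (A →ₗ[F] B) :=
  (LinearMap.llcomp F A B A).compr₂ (LinearMap.trace F A)

@[simp] lemma tracePair_apply {A B : Type*} [AddCommGroup A] [Module F A]
    [AddCommGroup B] [Module F B] (g : B →ₗ[F] A) (f : A →ₗ[F] B) :
    tracePair F A B g f = LinearMap.trace F A (g ∘ₗ f) := rfl

lemma tracePair_bijective (A B : Type*) [AddCommGroup A] [Module F A]
    [AddCommGroup B] [Module F B] [FiniteDimensional F A] [FiniteDimensional F B] :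
    Function.Bijective (tracePair F A B) := by
  have hinj : Function.Injective (tracePair F A B) := by
    rw [← LinearMap.ker_eq_bot]
    refine (Submodule.eq_bot_iff _).2 fun g hg => ?_
    rw [LinearMap.mem_ker] at hg
    ext b
    rw [LinearMap.zero_apply, ← Module.forall_dual_apply_eq_zero_iff F]
    intro φ
    have h := LinearMap.congr_fun hg (dualTensorHom F A B (φ ⊗ₜ b))
    have hc : g ∘ₗ dualTensorHom F A B (φ ⊗ₜ b) = dualTensorHom F A A (φ ⊗ₜ (g b)) := by
      ext a; simp
    rw [tracePair_apply, hc, LinearMap.trace_eq_contract_apply, contractLeft_apply] at h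
    simpa using h
  refine ⟨hinj, ?_⟩
  rw [← LinearMap.injective_iff_surjective_of_finrank_eq_finrank ?_]
  · exact hinj
  · rw [Subspace.dual_finrank_eq, Module.finrank_linearMap, Module.finrank_linearMap, mul_comm]

/-- `traceOrtho F S` is the pullback of the dual annihilator of `S` under the trace pairing. -/
lemma traceOrtho_eq_comap (S : Submodule F (U →ₗ[F] V)) :
    traceOrtho F S = S.dualAnnihilator.comap (tracePair F U V) := by
  ext v
  simp only [traceOrtho, Submodule.mem_mk, AddSubmonoid.mem_mk, AddSubsemigroup.mem_mk,
    Set.mem_setOf_eq, Submodule.mem_comap, Submodule.mem_dualAnnihilator, tracePair_apply]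

/-- Double orthogonality: the trace-orthogonal of `traceOrtho F S` recovers `S`. -/
lemma mem_of_ortho [FiniteDimensional F U] [FiniteDimensional F V]
    (S : Submodule F (U →ₗ[F] V)) (u : U →ₗ[F] V)
    (h : ∀ v ∈ traceOrtho F S, LinearMap.trace F U (v ∘ₗ u) = 0) : u ∈ S := by
  have hmap : (traceOrtho F S).map (tracePair F U V) = S.dualAnnihilator := by
    rw [traceOrtho_eq_comap, Submodule.map_comap_eq_of_surjective
      (tracePair_bijective U V).surjective]
  rw [← Subspace.dualAnnihilator_dualCoannihilator_eq (W := S),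
    Submodule.mem_dualCoannihilator]
  intro φ hφ
  rw [← hmap] at hφ
  obtain ⟨v, hv, rfl⟩ := hφ
  exact h v hv

/-- Second Trace Orthogonality Lemma:
dim S_{U₀} + dim(π ∘ S^⊥) = (dim V)(dim U - dim U₀), where π : U → U/U₀. -/
theorem stmt11 [FiniteDimensional F U] [FiniteDimensional F V]
    (U0 : Submodule F U) (S : Submodule F (U →ₗ[F] V)) :
    Module.finrank F ↥(S ⊓ vanishOn F U0) +
      Module.finrank F ↥((traceOrtho F S).map
        (LinearMap.llcomp F V U (U ⧸ U0) U0.mkQ)) =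
    Module.finrank F V * (Module.finrank F U - Module.finrank F U0) := by
  set P := U ⧸ U0
  set T : Submodule F (V →ₗ[F] P) :=
    (traceOrtho F S).map (LinearMap.llcomp F V U (U ⧸ U0) U0.mkQ) with hT
  -- j : (P →ₗ V) → (U →ₗ V), w ↦ w ∘ π
  set j : (P →ₗ[F] V) →ₗ[F] (U →ₗ[F] V) := LinearMap.lcomp F V U0.mkQ with hj
  have hjx : ∀ w : P →ₗ[F] V, j w = w ∘ₗ U0.mkQ := fun w => rfl
  have hjinj : Function.Injective j := by
    intro a b hab
    refine LinearMap.ext fun x => ?_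
    obtain ⟨y, rfl⟩ := U0.mkQ_surjective x
    exact LinearMap.congr_fun hab y
  -- range of j is vanishOn
  have hrange : LinearMap.range j = vanishOn F U0 := by
    ext u
    constructor
    · rintro ⟨w, rfl⟩ x hx
      have hx0 : U0.mkQ x = 0 := (Submodule.Quotient.mk_eq_zero U0).2 hx
      show w (U0.mkQ x) = 0
      rw [hx0, map_zero]
    · intro hu
      refine ⟨U0.liftQ u (fun x hx => hu x hx), ?_⟩
      rw [hjx]
      exact Submodule.liftQ_mkQ _ _ _
  -- the trace-pairing equivalence e : (P →ₗ V) ≃ Dual (V →ₗ P)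
  let e : (P →ₗ[F] V) ≃ₗ[F] Module.Dual F (V →ₗ[F] P) :=
    LinearEquiv.ofBijective (tracePair F V P) (tracePair_bijective V P)
  have he : ∀ (w : P →ₗ[F] V) (m : V →ₗ[F] P),
      e w m = LinearMap.trace F V (w ∘ₗ m) := fun _ _ => rfl
  -- key identification
  have hkey : T.dualAnnihilator.comap (e : (P →ₗ[F] V) →ₗ[F] _) = S.comap j := by
    ext w
    simp only [Submodule.mem_comap, Submodule.mem_dualAnnihilator, LinearEquiv.coe_coe,
      LinearEquiv.ofBijective_apply, hT, Submodule.mem_map, hjx]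
    constructor
    · intro h
      apply mem_of_ortho S
      intro v hv
      have h0 := h _ ⟨v, hv, rfl⟩
      rw [he] at h0
      rw [LinearMap.trace_comp_comm']
      exact h0
    · rintro hw φ ⟨v, hv, rfl⟩
      rw [he]
      have hc : w ∘ₗ (LinearMap.llcomp F V U (U ⧸ U0) U0.mkQ) v = (w ∘ₗ U0.mkQ) ∘ₗ v := rfl
      rw [hc, ← LinearMap.trace_comp_comm']
      exact hv _ hw
  -- finrank (S ⊓ vanishOn) = finrank (comap j S) = finrank (dualAnnihilator T)
  have h1 : (S.comap j).map j = S ⊓ vanishOn F U0 := by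
    rw [Submodule.map_comap_eq, hrange, inf_comm]
  have h2 : Module.finrank F ↥(S ⊓ vanishOn F U0) = Module.finrank F ↥(S.comap j) := by
    rw [← h1]
    exact (Submodule.equivMapOfInjective j hjinj (S.comap j)).symm.finrank_eq
  have h3 : Module.finrank F ↥(S.comap j) = Module.finrank F ↥T.dualAnnihilator := by
    rw [← hkey, Submodule.comap_equiv_eq_map_symm]
    exact (LinearEquiv.finrank_map_eq _ _)
  -- dimension count
  have h4 : Module.finrank F ↥T.dualAnnihilator + Module.finrank F ↥T =
      Module.finrank F (V →ₗ[F] P) := by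
    rw [(Subspace.quotEquivAnnihilator T).symm.finrank_eq]
    exact Submodule.finrank_quotient_add_finrank T
  have h5 : Module.finrank F P + Module.finrank F U0 = Module.finrank F U :=
    Submodule.finrank_quotient_add_finrank U0
  have h6 : Module.finrank F P = Module.finrank F U - Module.finrank F U0 := by omega
  rw [h2, h3, ← h6]
  rw [Module.finrank_linearMap] at h4
  exact h4
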